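/- arXiv:math/0408206 — 2 statements merged into one kernel-verified Lean document; each statement's English description precedes it below -/
import Mathlib

section
/- Let V be a real inner product space with an orthogonal complex structure J, and let W ⊆ V be a subspace. Define Φ : W → W⊥ by Φ(X) = P_{W⊥}(JX) and Ξ : W⊥ → W by Ξ(U) = P_W(JU). Then: (i) ⟨Φ(X), Φ(Y)⟩ = ⟨X, Y⟩ + ⟨T_W(T_W X), Y⟩ for all X, Y ∈ W; (ii) T_{W⊥} ∘ Φ = −Φ ∘ T_W; (iii) Ξ ∘ Φ = −(id_W + T_W ∘ T_W) and Φ ∘ Ξ = −(id_{W⊥} + T_{W⊥} ∘ T_{W⊥}); (iv) consequently, if W has equal Kähler angles θ (i.e. T_W ∘ T_W = −cos²θ·id_W), then ‖Φ(X)‖² = sin²θ·‖X‖² for all X ∈ W and Ξ ∘ Φ = −sin²θ·id_W. -/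
/-!
STATEMENT 0: For a real inner product space `V` with orthogonal complex structure `J`
and a subspace `W`, with `Φ X = P_{W⊥}(J X)`, `Ξ U = P_W (J U)` and `T_U = P_U ∘ J`:
(i) ⟨Φ X, Φ Y⟩ = ⟨X,Y⟩ + ⟨T_W (T_W X), Y⟩;
(ii) T_{W⊥} ∘ Φ = −Φ ∘ T_W;
(iii) Ξ ∘ Φ = −(id + T_W²), Φ ∘ Ξ = −(id + T_{W⊥}²);
(iv) if T_W² = −cos²θ·id then ‖Φ X‖² = sin²θ‖X‖² and Ξ ∘ Φ = −sin²θ·id.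
-/

open scoped RealInnerProductSpace

noncomputable section

variable {V : Type*} [NormedAddCommGroup V] [InnerProductSpace ℝ V] [FiniteDimensional ℝ V]

/-- `T_U = P_U ∘ J` restricted to the subspace `U`. -/
noncomputable def TU (J : V →ₗ[ℝ] V) (U : Submodule ℝ V) (X : U) : U :=
  U.orthogonalProjectionOnto (J X)

/-- `Φ : W → W⊥`, `Φ X = P_{W⊥}(J X)`. -/
noncomputable def PhiMap (J : V →ₗ[ℝ] V) (W : Submodule ℝ V) (X : W) : Wᗮ :=
  Wᗮ.orthogonalProjectionOnto (J X)

/-- `Ξ : W⊥ → W`, `Ξ U = P_W (J U)`. -/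
noncomputable def XiMap (J : V →ₗ[ℝ] V) (W : Submodule ℝ V) (U : Wᗮ) : W :=
  W.orthogonalProjectionOnto (J U)

theorem stmt_0 (J : V →ₗ[ℝ] V)
    (hJorth : ∀ x y : V, ⟪J x, J y⟫ = ⟪x, y⟫)
    (hJsq : ∀ x : V, J (J x) = -x)
    (W : Submodule ℝ V) :
    (∀ X Y : W, ⟪PhiMap J W X, PhiMap J W Y⟫ = ⟪X, Y⟫ + ⟪TU J W (TU J W X), Y⟫) ∧
    (∀ X : W, TU J Wᗮ (PhiMap J W X) = - PhiMap J W (TU J W X)) ∧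
    (∀ X : W, XiMap J W (PhiMap J W X) = -(X + TU J W (TU J W X))) ∧
    (∀ U : Wᗮ, PhiMap J W (XiMap J W U) = -(U + TU J Wᗮ (TU J Wᗮ U))) ∧
    (∀ θ : ℝ, (∀ X : W, TU J W (TU J W X) = -(Real.cos θ ^ 2) • X) →
      (∀ X : W, ‖PhiMap J W X‖ ^ 2 = Real.sin θ ^ 2 * ‖X‖ ^ 2) ∧
      (∀ X : W, XiMap J W (PhiMap J W X) = -(Real.sin θ ^ 2) • X)) := by
  -- skew-adjointness of J
  have hskew : ∀ x y : V, ⟪x, J y⟫ = -⟪J x, y⟫ := by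
    intro x y
    have h := hJorth x (J y)
    rw [hJsq y, inner_neg_right] at h
    linarith
  -- decomposition of J X for X ∈ W
  have hdecW : ∀ X : W, J (X : V) = ((TU J W X : V)) + ((PhiMap J W X : V)) := by
    intro X
    exact (Submodule.starProjection_add_starProjection_orthogonal (K := W) (J (X : V))).symm
  -- projection of W-elements onto Wᗮ is zero
  have hPerpZero : ∀ X : W, Wᗮ.orthogonalProjectionOnto (X : V) = 0 := by
    intro X
    apply Submodule.orthogonalProjectionOnto_apply_of_mem_orthogonal
    rw [Submodule.orthogonal_orthogonal]
    exact X.2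
  -- J of Φ X
  have hJPhi : ∀ X : W, J ((PhiMap J W X : V)) = -(X : V) - J ((TU J W X : V)) := by
    intro X
    have h := congrArg J (hdecW X)
    rw [hJsq, map_add] at h
    rw [h]
    abel
  -- (i)
  have part1 : ∀ X Y : W, ⟪PhiMap J W X, PhiMap J W Y⟫ = ⟪X, Y⟫ + ⟪TU J W (TU J W X), Y⟫ := by
    intro X Y
    rw [Submodule.coe_inner, Submodule.coe_inner, Submodule.coe_inner]
    have hx : ((PhiMap J W X : V)) = J (X : V) - ((TU J W X : V)) := by
      rw [hdecW X]; abel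
    have hy : ((PhiMap J W Y : V)) = J (Y : V) - ((TU J W Y : V)) := by
      rw [hdecW Y]; abel
    have hb : ⟪J (X : V), ((TU J W Y : V))⟫ = ⟪((TU J W X : V)), ((TU J W Y : V))⟫ := by
      rw [← Submodule.coe_inner]
      exact (Submodule.inner_orthogonalProjectionOnto_eq_of_mem_right (K := W) (TU J W Y) (J (X : V))).symm
    have hc : ⟪((TU J W X : V)), J (Y : V)⟫ = -⟪((TU J W (TU J W X) : V)), (Y : V)⟫ := by
      rw [hskew]
      congr 1
      rw [← Submodule.coe_inner]
      exact (Submodule.inner_orthogonalProjectionOnto_eq_of_mem_right (K := W) Y (J ((TU J W X : V)))).symm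
    rw [hx, hy, inner_sub_left, inner_sub_right, inner_sub_right, hJorth, hb, hc]
    ring
  -- (iii) first part
  have part3 : ∀ X : W, XiMap J W (PhiMap J W X) = -(X + TU J W (TU J W X)) := by
    intro X
    show W.orthogonalProjectionOnto (J ((PhiMap J W X : V))) = _
    rw [hJPhi X, map_sub, map_neg, Submodule.orthogonalProjectionOnto_mem_subspace_eq_self X]
    show -X - TU J W (TU J W X) = _
    abel
  refine ⟨part1, ?_, part3, ?_, ?_⟩
  · -- (ii)
    intro X
    show Wᗮ.orthogonalProjectionOnto (J ((PhiMap J W X : V))) = _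
    rw [hJPhi X, map_sub, map_neg, hPerpZero X, neg_zero, zero_sub]
    rfl
  · -- (iii) second part
    intro U
    have hdecU : J (U : V) = ((XiMap J W U : V)) + ((TU J Wᗮ U : V)) :=
      (Submodule.starProjection_add_starProjection_orthogonal (K := W) (J (U : V))).symm
    have hJXi : J ((XiMap J W U : V)) = -(U : V) - J ((TU J Wᗮ U : V)) := by
      have h := congrArg J hdecU
      rw [hJsq, map_add] at h
      rw [h]
      abel
    show Wᗮ.orthogonalProjectionOnto (J ((XiMap J W U : V))) = _
    rw [hJXi, map_sub, map_neg, Submodule.orthogonalProjectionOnto_mem_subspace_eq_self U]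
    show -U - TU J Wᗮ (TU J Wᗮ U) = _
    abel
  · -- (iv)
    intro θ hθ
    have hsin : Real.sin θ ^ 2 = 1 - Real.cos θ ^ 2 := by
      have := Real.sin_sq_add_cos_sq θ
      linarith
    constructor
    · intro X
      have h := part1 X X
      rw [hθ X, real_inner_self_eq_norm_sq, real_inner_self_eq_norm_sq,
        real_inner_smul_left, real_inner_self_eq_norm_sq] at h
      rw [hsin]
      linear_combination h
    · intro X
      rw [part3 X, hθ X, hsin]
      module

end
end

section
/- Identify ℝ⁸ with ℝ⁴ × ℝ⁴ with the Euclidean inner product and the orthogonal complex structure J₀(X,Y) = (−Y, X). Let E ⊆ ℝ⁸ be a 4-dimensional subspace with equal Kähler angles θ, i.e. the endomorphism T_E = P_E ∘ J₀ restricted to E satisfies T_E ∘ T_E = −c²·id_E, where c = cosθ ∈ [0,1]. Then for every orthonormal basis (v₁, v₂, v₃, v₄) of E, the determinant of the 8×8 real matrix whose columns are the standard coordinates of v₁, v₂, v₃, v₄, J₀v₁, J₀v₂, J₀v₃, J₀v₄ equals (1 − c²)² = sin⁴θ. In particular this determinant is strictly positive whenever c < 1, i.e. whenever E is not a complex subspace.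 -/
set_option maxHeartbeats 1000000


/-!
STATEMENT 2: ℝ⁸ = ℝ⁴ × ℝ⁴ with `J₀(X,Y) = (−Y,X)`. If `E` is a 4-dimensional
subspace with equal Kähler angles `θ`, i.e. `T_E ∘ T_E = −c²·id_E` with
`c = cos θ ∈ [0,1]`, then for every orthonormal basis `(v₁,…,v₄)` of `E`, the
determinant of the 8×8 matrix with columns `v₁,…,v₄,J₀v₁,…,J₀v₄` equals
`(1 − c²)² = sin⁴ θ`; in particular it is positive whenever `c < 1`.
-/

open scoped RealInnerProductSpace

noncomputable section

/-- ℝ⁸ identified with ℝ⁴ × ℝ⁴ (coordinates indexed by `Fin 4 ⊕ Fin 4`). -/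
abbrev E8 : Type := EuclideanSpace ℝ (Fin 4 ⊕ Fin 4)

/-- `J₀ (X, Y) = (−Y, X)`: first four coordinates of `J₀ x` are minus the last four
coordinates of `x`, and the last four are the first four of `x`. -/
noncomputable def J0 : E8 →ₗ[ℝ] E8 :=
  Matrix.toEuclideanLin
    (Matrix.fromBlocks (0 : Matrix (Fin 4) (Fin 4) ℝ) (-1) 1 0)

/-- `T_E = P_E ∘ J₀` restricted to `E`. -/
noncomputable def TE (E : Submodule ℝ E8) (X : E) : E :=
  E.orthogonalProjectionOnto (J0 X)

/-- The 8×8 matrix whose columns are the standard coordinates of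
`v₁, v₂, v₃, v₄, J₀v₁, J₀v₂, J₀v₃, J₀v₄`. -/
noncomputable def colMatrix (v : Fin 4 → E8) : Matrix (Fin 4 ⊕ Fin 4) (Fin 4 ⊕ Fin 4) ℝ :=
  Matrix.of fun i j => Sum.elim (fun k => v k i) (fun k => J0 (v k) i) j

lemma J0_inl (x : E8) (a : Fin 4) : J0 x (Sum.inl a) = - x (Sum.inr a) := by
  have h : J0 x (Sum.inl a) = ((Matrix.fromBlocks (0 : Matrix (Fin 4) (Fin 4) ℝ) (-1) 1 0).mulVec
      (fun i => x i)) (Sum.inl a) := rfl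
  rw [h]
  simp [Matrix.mulVec, dotProduct, Matrix.fromBlocks, Fintype.sum_sum_type,
    Matrix.one_apply, ite_mul, Finset.sum_ite_eq]

lemma J0_inr (x : E8) (a : Fin 4) : J0 x (Sum.inr a) = x (Sum.inl a) := by
  have h : J0 x (Sum.inr a) = ((Matrix.fromBlocks (0 : Matrix (Fin 4) (Fin 4) ℝ) (-1) 1 0).mulVec
      (fun i => x i)) (Sum.inr a) := rfl
  rw [h]
  simp [Matrix.mulVec, dotProduct, Matrix.fromBlocks, Fintype.sum_sum_type,
    Matrix.one_apply, ite_mul, Finset.sum_ite_eq]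

lemma det_blocks {n : Type*} [Fintype n] [DecidableEq n] (X Y : Matrix n n ℝ) :
    (Matrix.fromBlocks X (-Y) Y X).det
      = Complex.normSq ((X.map Complex.ofReal) + Complex.I • (Y.map Complex.ofReal)).det := by
  set Xc := X.map (Complex.ofReal) with hXc
  set Yc := Y.map (Complex.ofReal) with hYc
  set W : Matrix n n ℂ := Xc + Complex.I • Yc with hW
  have hcast : ((Matrix.fromBlocks X (-Y) Y X).det : ℂ)
      = (Matrix.fromBlocks Xc (-Yc) Yc Xc).det := by
    have h : Matrix.fromBlocks Xc (-Yc) Yc Xc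
        = Complex.ofRealHom.mapMatrix (Matrix.fromBlocks X (-Y) Y X) := by
      ext i j
      rcases i with i | i <;> rcases j with j | j <;> simp [Matrix.fromBlocks, hXc, hYc, Matrix.map_apply]
    rw [h, ← RingHom.map_det]
    rfl
  have hconj : Xc - Complex.I • Yc = W.map (starRingEnd ℂ) := by
    ext i j
    simp [hW, hXc, hYc, Matrix.map_apply, Matrix.sub_apply, Matrix.add_apply,
      Matrix.smul_apply, Complex.conj_ofReal, smul_eq_mul]
    ring
  have hkey : Matrix.fromBlocks (1 : Matrix n n ℂ) (Complex.I • 1) 0 1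
        * Matrix.fromBlocks Xc (-Yc) Yc Xc
        * Matrix.fromBlocks (1 : Matrix n n ℂ) (-(Complex.I • 1)) 0 1
      = Matrix.fromBlocks W 0 Yc (Xc - Complex.I • Yc) := by
    ext i j
    rcases i with i | i <;> rcases j with j | j <;>
      simp [Matrix.fromBlocks_multiply, Matrix.fromBlocks, Matrix.mul_apply,
        Matrix.one_apply, Matrix.smul_apply, Matrix.add_apply, Matrix.sub_apply,
        Matrix.neg_apply, ite_mul, mul_ite, Finset.sum_ite_eq, Finset.sum_ite_eq',
        Fintype.sum_sum_type, hW, smul_eq_mul, Finset.mul_sum, Finset.sum_add_distrib] <;>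
      first
      | ring1
      | linear_combination (-(Y.map Complex.ofReal i j)) * Complex.I_sq
  have hdetP : (Matrix.fromBlocks (1 : Matrix n n ℂ) (Complex.I • 1) (0 : Matrix n n ℂ) 1).det = 1 := by
    rw [Matrix.det_fromBlocks_zero₂₁ (1 : Matrix n n ℂ) (Complex.I • 1) 1]; simp
  have hdetQ : (Matrix.fromBlocks (1 : Matrix n n ℂ) (-(Complex.I • 1)) (0 : Matrix n n ℂ) 1).det = 1 := by
    rw [Matrix.det_fromBlocks_zero₂₁ (1 : Matrix n n ℂ) (-(Complex.I • 1)) 1]; simp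
  have h2 : (Matrix.fromBlocks Xc (-Yc) Yc Xc).det = W.det * (starRingEnd ℂ) W.det := by
    have h3 := congrArg Matrix.det hkey
    rw [Matrix.det_mul, Matrix.det_mul, hdetP, hdetQ, one_mul, mul_one,
      Matrix.det_fromBlocks_zero₁₂ W Yc (Xc - Complex.I • Yc), hconj,
      show W.map (starRingEnd ℂ) = (starRingEnd ℂ).mapMatrix W from rfl,
      ← RingHom.map_det] at h3
    exact h3
  have h4 : ((Matrix.fromBlocks X (-Y) Y X).det : ℂ) = (Complex.normSq W.det : ℂ) := by
    rw [hcast, h2, Complex.mul_conj]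
  exact_mod_cast h4

theorem stmt_2 (E : Submodule ℝ E8) (hE : Module.finrank ℝ E = 4)
    (c : ℝ) (hc0 : 0 ≤ c) (hc1 : c ≤ 1)
    (hEKA : ∀ X : E, TE E (TE E X) = -(c ^ 2) • X)
    (v : Fin 4 → E8) (hvE : ∀ k, v k ∈ E) (hon : Orthonormal ℝ v)
    (hspan : Submodule.span ℝ (Set.range v) = E) :
    (colMatrix v).det = (1 - c ^ 2) ^ 2 ∧
    (c < 1 → 0 < (colMatrix v).det) := by
  classical
  set X : Matrix (Fin 4) (Fin 4) ℝ := Matrix.of fun i k => v k (Sum.inl i) with hX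
  set Y : Matrix (Fin 4) (Fin 4) ℝ := Matrix.of fun i k => v k (Sum.inr i) with hY
  set A : Matrix (Fin 4) (Fin 4) ℝ := (Matrix.of fun j k => (inner ℝ (v j) (J0 (v k)) : ℝ)) with hA
  set W : Matrix (Fin 4) (Fin 4) ℂ := X.map Complex.ofReal + Complex.I • Y.map Complex.ofReal
    with hW
  set Ac : Matrix (Fin 4) (Fin 4) ℂ := A.map Complex.ofReal with hAc
  -- colMatrix as block matrix
  have hcol : colMatrix v = Matrix.fromBlocks X (-Y) Y X := by
    ext i j
    rcases i with i | i <;> rcases j with j | j <;>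
      simp [colMatrix, Matrix.fromBlocks, J0_inl, J0_inr, hX, hY]
  -- Gram computation : W.conjTranspose * W = 1 - I • Ac
  have hgram : W.conjTranspose * W = 1 - Complex.I • Ac := by
    ext j k
    have h1 : (∑ a : Fin 4, v j (Sum.inl a) * v k (Sum.inl a))
        + (∑ a : Fin 4, v j (Sum.inr a) * v k (Sum.inr a)) = (if j = k then (1:ℝ) else 0) := by
      have h := orthonormal_iff_ite.mp hon j k
      rw [real_inner_comm, PiLp.inner_apply] at h
      simpa [Fintype.sum_sum_type] using h
    have h2 : A j k = (∑ a : Fin 4, v j (Sum.inl a) * (-(v k (Sum.inr a))))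
        + ∑ a : Fin 4, v j (Sum.inr a) * v k (Sum.inl a) := by
      simp only [hA, Matrix.of_apply]
      rw [real_inner_comm]
      simp [PiLp.inner_apply, Fintype.sum_sum_type, J0_inl, J0_inr]
    have hterm : ∀ i : Fin 4, (starRingEnd ℂ) (W i j) * (W i k)
        = ((v j (Sum.inl i) * v k (Sum.inl i) + v j (Sum.inr i) * v k (Sum.inr i) : ℝ) : ℂ)
          - Complex.I * ((v j (Sum.inl i) * (-(v k (Sum.inr i)))
              + v j (Sum.inr i) * v k (Sum.inl i) : ℝ) : ℂ) := by
      intro i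
      simp only [hW, hX, hY, Matrix.add_apply, Matrix.smul_apply, Matrix.map_apply,
        Matrix.of_apply, smul_eq_mul, map_add, map_mul, Complex.conj_ofReal, Complex.conj_I]
      push_cast
      linear_combination (-(v j (Sum.inr i)) * v k (Sum.inr i)) * Complex.I_sq
    have hLHS : (W.conjTranspose * W) j k = ∑ i : Fin 4, (starRingEnd ℂ) (W i j) * (W i k) := by
      simp [Matrix.mul_apply, Matrix.conjTranspose_apply]
    rw [hLHS, Finset.sum_congr rfl fun i _ => hterm i]
    rw [Finset.sum_sub_distrib, ← Complex.ofReal_sum, ← Finset.mul_sum, ← Complex.ofReal_sum,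
      Finset.sum_add_distrib, Finset.sum_add_distrib, h1, ← h2]
    simp [hAc, Matrix.one_apply, apply_ite Complex.ofReal]
  -- the matrix of T_E in the orthonormal basis is A, and A * A = -(c²) • 1
  have hAA : A * A = (-(c^2)) • (1 : Matrix (Fin 4) (Fin 4) ℝ) := by
    set w : Fin 4 → E := fun k => ⟨v k, hvE k⟩ with hw
    have hwon : Orthonormal ℝ w := by
      rw [orthonormal_iff_ite] at hon ⊢
      intro i j
      rw [Submodule.coe_inner]
      exact hon i j
    have hwspan : Submodule.span ℝ (Set.range w) = ⊤ := by
      apply Submodule.map_injective_of_injective E.injective_subtype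
      have himg : E.subtype '' Set.range w = Set.range v := by
        ext x
        simp [hw, Set.mem_image, Set.mem_range]
      rw [Submodule.map_span, Submodule.map_subtype_top, himg, hspan]
    set ob : OrthonormalBasis (Fin 4) ℝ E := OrthonormalBasis.mk hwon hwspan.ge with hob
    have hobw : ⇑ob = w := OrthonormalBasis.coe_mk _ _
    set L : E →ₗ[ℝ] E :=
      (E.orthogonalProjectionOnto).toLinearMap ∘ₗ (J0 ∘ₗ E.subtype) with hL
    have hAw : ∀ j k, A j k = (inner ℝ (w j) (L (w k)) : ℝ) := by
      intro j k
      have : (inner ℝ (w j) ((E.orthogonalProjectionOnto (J0 (v k)))) : ℝ) = (inner ℝ ((w j : E8)) (J0 (v k)) : ℝ) :=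
        Submodule.inner_orthogonalProjectionOnto_eq_of_mem_left (K := E) (w j) (J0 (v k))
      simpa [hA, hL, hw] using this.symm
    have hexp : ∀ x : E, ∑ i, (inner ℝ (w i) (x) : ℝ) • w i = x := by
      intro x
      conv_rhs => rw [← ob.sum_repr x]
      refine Finset.sum_congr rfl fun i _ => ?_
      rw [ob.repr_apply_apply, hobw]
    have e1 : ∀ k, L (w k) = ∑ i, A i k • w i := by
      intro k
      rw [← hexp (L (w k))]
      exact Finset.sum_congr rfl fun i _ => by rw [hAw i k]
    ext j k
    have key : (∑ i, A j i * A i k) = -(c^2) * (if j = k then (1:ℝ) else 0) := by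
      have hLL : L (L (w k)) = -(c^2) • (w k) := hEKA (w k)
      have : (inner ℝ (w j) (L (L (w k))) : ℝ) = ∑ i, A i k * A j i := by
        rw [e1 k, map_sum]
        simp only [map_smul]
        rw [inner_sum]
        refine Finset.sum_congr rfl fun i _ => ?_
        rw [real_inner_smul_right (F := E), ← hAw j i]
      rw [hLL, real_inner_smul_right (F := E)] at this
      rw [orthonormal_iff_ite.mp hwon j k] at this
      rw [Finset.sum_congr rfl fun i (_ : i ∈ Finset.univ) => mul_comm (A j i) (A i k)]
      exact this.symm
    simpa [Matrix.mul_apply, Matrix.smul_apply, Matrix.one_apply] using key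
  -- determinants
  have hAc2 : Ac * Ac = ((-(c^2) : ℝ) : ℂ) • (1 : Matrix (Fin 4) (Fin 4) ℂ) := by
    have hAcm : Ac = Complex.ofRealHom.mapMatrix A := rfl
    rw [hAcm, ← map_mul, hAA]
    ext i j
    simp only [RingHom.mapMatrix_apply, Matrix.map_apply, Matrix.smul_apply,
      Matrix.one_apply, smul_eq_mul, apply_ite Complex.ofReal]
    split_ifs <;> simp
  have h6 : (1 - Complex.I • Ac) * (1 + Complex.I • Ac)
      = ((1 - c^2 : ℝ) : ℂ) • (1 : Matrix (Fin 4) (Fin 4) ℂ) := by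
    have hBB : (Complex.I • Ac) * (Complex.I • Ac) = ((c^2 : ℝ) : ℂ) • 1 := by
      rw [Matrix.smul_mul, Matrix.mul_smul, smul_smul, Complex.I_mul_I, hAc2, smul_smul]
      push_cast
      ring_nf
    have expand : (1 - Complex.I • Ac) * (1 + Complex.I • Ac)
        = 1 - (Complex.I • Ac) * (Complex.I • Ac) := by
      simp only [Matrix.sub_mul, Matrix.mul_add, Matrix.one_mul, Matrix.mul_one]
      abel
    have hsplit : ((1 - c^2 : ℝ) : ℂ) • (1 : Matrix (Fin 4) (Fin 4) ℂ)
        = (1 : Matrix (Fin 4) (Fin 4) ℂ) - ((c^2 : ℝ) : ℂ) • 1 := by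
      have : ((1 - c^2 : ℝ) : ℂ) = 1 - ((c^2 : ℝ) : ℂ) := by push_cast; ring
      rw [this, sub_smul, one_smul]
    rw [expand, hBB, hsplit]
  have h7 : (1 + Complex.I • Ac).det = (starRingEnd ℂ) ((1 - Complex.I • Ac).det) := by
    have hm : (1 + Complex.I • Ac) = (starRingEnd ℂ).mapMatrix (1 - Complex.I • Ac) := by
      ext i j
      simp [Matrix.one_apply, Matrix.smul_apply, Matrix.sub_apply, Matrix.add_apply, hAc,
        Complex.conj_I, Complex.conj_ofReal, apply_ite (starRingEnd ℂ), sub_eq_add_neg]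
    rw [hm, ← RingHom.map_det]
  have hd : (colMatrix v).det = Complex.normSq W.det := by rw [hcol, det_blocks]
  set s : ℝ := Complex.normSq W.det with hs
  have h5 : (s : ℂ) = (1 - Complex.I • Ac).det := by
    rw [← hgram, Matrix.det_mul, Matrix.det_conjTranspose, hs,
      Complex.normSq_eq_conj_mul_self, Complex.star_def]
  have h8 : ((s^2 : ℝ) : ℂ) = (((1 - c^2)^4 : ℝ) : ℂ) := by
    have : (s : ℂ) * (s : ℂ) = (1 - Complex.I • Ac).det * (1 + Complex.I • Ac).det := by
      rw [h5, h7, ← h5]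
      rw [Complex.conj_ofReal]
    rw [← Matrix.det_mul, h6, Matrix.det_smul, Matrix.det_one, mul_one] at this
    have hcard : (Fintype.card (Fin 4)) = 4 := by simp
    rw [hcard] at this
    push_cast at this ⊢
    rw [← this]
    ring
  have h9 : s^2 = (1 - c^2)^4 := by exact_mod_cast h8
  have hs0 : 0 ≤ s := Complex.normSq_nonneg _
  have hval : s = (1 - c^2)^2 := by nlinarith [sq_nonneg (s - (1 - c^2)^2), sq_nonneg (1 - c^2)]
  constructor
  · rw [hd, hval]
  · intro hclt
    rw [hd, hval]
    have : 0 < 1 - c^2 := by nlinarith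
    positivity


end
end
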